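/- Let G be a triorthogonal matrix obtained by puncturing a triorthogonal subspace: if G̃ = [I_m | P] is in reduced row echelon form with row span a triorthogonal subspace, and P is split as P_T (first k_T rows) and P_0 (remaining k_0 rows), then the matrix [[0, P_T],[I_{k_0}, P_0]] is triorthogonal, with the first k_T rows having odd weight and the last k_0 rows having even weight. -/

import Mathlib

/-- Rows of the pre-puncture matrix `G̃ = [I_m | P]` in reduced row echelon form,
with `m = kT + k0` rows, where row `a` is the `a`-th standard basis vector on the
first `m` coordinates followed by row `a` of `P`. -/
def fullRow {kT k0 n' : ℕ} (P : Matrix (Fin kT ⊕ Fin k0) (Fin n') (ZMod 2)) :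
    Fin kT ⊕ Fin k0 → ((Fin kT ⊕ Fin k0) ⊕ Fin n') → ZMod 2 :=
  fun a j => match j with
    | Sum.inl b => if a = b then 1 else 0
    | Sum.inr j' => P a j'

/-- Rows of the punctured matrix `[[0, P_T],[I_{k0}, P_0]]`, obtained from `[I_m | P]`
by deleting the first `kT` columns. -/
def punctRow {kT k0 n' : ℕ} (P : Matrix (Fin kT ⊕ Fin k0) (Fin n') (ZMod 2)) :
    Fin kT ⊕ Fin k0 → (Fin k0 ⊕ Fin n') → ZMod 2 :=
  fun a j => match j with
    | Sum.inl b => if a = Sum.inr b then 1 else 0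
    | Sum.inr j' => P a j'

open Finset

theorem card_filter_sum' {α β : Type*} [Fintype α] [Fintype β] (p : α ⊕ β → Prop) [DecidablePred p] :
    (univ.filter p).card = (univ.filter (fun a => p (.inl a))).card + (univ.filter (fun b => p (.inr b))).card := by
  rw [← Finset.card_disjSum]
  congr 1
  ext j
  cases j <;> simp

lemma zmod2_cube (x : ZMod 2) : (x * x * x = 1) = (x = 1) := by revert x; decide
lemma zmod2_sq (x y : ZMod 2) : (x * x * y = 1) = (x * y = 1) := by revert x y; decide


/-- Puncturing a triorthogonal subspace: if the row span of `[I_m | P]` is a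
triorthogonal subspace, then the punctured matrix `[[0,P_T],[I_{k0},P_0]]` is
triorthogonal, with first `kT` rows of odd weight and last `k0` rows of even weight. -/
theorem punctured_triorthogonal {kT k0 n' : ℕ}
    (P : Matrix (Fin kT ⊕ Fin k0) (Fin n') (ZMod 2))
    (htrio : ∀ u ∈ Submodule.span (ZMod 2) (Set.range (fullRow P)),
             ∀ v ∈ Submodule.span (ZMod 2) (Set.range (fullRow P)),
             ∀ w ∈ Submodule.span (ZMod 2) (Set.range (fullRow P)),
      Even ((Finset.univ.filter (fun j => u j * v j * w j = 1)).card)) :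
    (∀ a b : Fin kT ⊕ Fin k0, a ≠ b →
      Even ((Finset.univ.filter (fun j => punctRow P a j * punctRow P b j = 1)).card)) ∧
    (∀ a b c : Fin kT ⊕ Fin k0, a ≠ b → a ≠ c → b ≠ c →
      Even ((Finset.univ.filter
        (fun j => punctRow P a j * punctRow P b j * punctRow P c j = 1)).card)) ∧
    (∀ a : Fin kT,
      Odd ((Finset.univ.filter (fun j => punctRow P (Sum.inl a) j = 1)).card)) ∧
    (∀ a : Fin k0,
      Even ((Finset.univ.filter (fun j => punctRow P (Sum.inr a) j = 1)).card)) := by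
  have hmem : ∀ a, fullRow P a ∈ Submodule.span (ZMod 2) (Set.range (fullRow P)) :=
    fun a => Submodule.subset_span (Set.mem_range_self a)
  refine ⟨?_, ?_, ?_, ?_⟩
  · -- pairs
    intro a b hab
    have h := htrio _ (hmem a) _ (hmem a) _ (hmem b)
    rw [card_filter_sum'] at h ⊢
    simp only [fullRow, punctRow, zmod2_sq] at h ⊢
    have hid : (univ.filter (fun j : Fin kT ⊕ Fin k0 =>
        (if a = j then (1:ZMod 2) else 0) * (if b = j then 1 else 0) = 1)) = ∅ := by
      rw [Finset.filter_eq_empty_iff]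
      intro j _
      by_cases h1 : a = j <;> by_cases h2 : b = j
      · exact absurd (h1.trans h2.symm) hab
      all_goals simp [h1, h2]
    have hid' : (univ.filter (fun j : Fin k0 =>
        (if a = Sum.inr j then (1:ZMod 2) else 0) * (if b = Sum.inr j then 1 else 0) = 1)) = ∅ := by
      rw [Finset.filter_eq_empty_iff]
      intro j _
      by_cases h1 : a = Sum.inr j <;> by_cases h2 : b = Sum.inr j
      · exact absurd (h1.trans h2.symm) hab
      all_goals simp [h1, h2]
    rw [hid] at h
    erw [hid']
    simpa using h
  · -- triples
    intro a b c hab hac hbc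
    have h := htrio _ (hmem a) _ (hmem b) _ (hmem c)
    rw [card_filter_sum'] at h ⊢
    simp only [fullRow, punctRow] at h ⊢
    have hid : (univ.filter (fun j : Fin kT ⊕ Fin k0 =>
        (if a = j then (1:ZMod 2) else 0) * (if b = j then 1 else 0) * (if c = j then 1 else 0) = 1)) = ∅ := by
      rw [Finset.filter_eq_empty_iff]
      intro j _
      by_cases h1 : a = j <;> by_cases h2 : b = j
      · exact absurd (h1.trans h2.symm) hab
      all_goals simp [h1, h2]
    have hid' : (univ.filter (fun j : Fin k0 =>
        (if a = Sum.inr j then (1:ZMod 2) else 0) * (if b = Sum.inr j then 1 else 0) *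
          (if c = Sum.inr j then 1 else 0) = 1)) = ∅ := by
      rw [Finset.filter_eq_empty_iff]
      intro j _
      by_cases h1 : a = Sum.inr j <;> by_cases h2 : b = Sum.inr j
      · exact absurd (h1.trans h2.symm) hab
      all_goals simp [h1, h2]
    erw [hid] at h
    erw [hid']
    simpa using h
  · -- odd rows
    intro a
    have h := htrio _ (hmem (Sum.inl a)) _ (hmem (Sum.inl a)) _ (hmem (Sum.inl a))
    rw [card_filter_sum'] at h ⊢
    simp only [fullRow, punctRow, zmod2_cube] at h ⊢
    have hid : (univ.filter (fun j : Fin kT ⊕ Fin k0 =>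
        (if Sum.inl a = j then (1:ZMod 2) else 0) = 1)) = {Sum.inl a} := by
      ext j
      by_cases h1 : Sum.inl a = j
      · subst h1; simp
      · simp [h1, Ne.symm h1]
    have hid' : (univ.filter (fun j : Fin k0 =>
        (if (Sum.inl a : Fin kT ⊕ Fin k0) = Sum.inr j then (1:ZMod 2) else 0) = 1)) = ∅ := by
      rw [Finset.filter_eq_empty_iff]
      intro j _
      simp
    rw [hid, Finset.card_singleton] at h
    erw [hid', Finset.card_empty]
    rw [add_comm, Nat.even_add_one] at h
    rw [zero_add]
    exact Nat.not_even_iff_odd.mp h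
  · -- even rows
    intro a
    have h := htrio _ (hmem (Sum.inr a)) _ (hmem (Sum.inr a)) _ (hmem (Sum.inr a))
    rw [card_filter_sum'] at h ⊢
    simp only [fullRow, punctRow, zmod2_cube] at h ⊢
    have hid : (univ.filter (fun j : Fin kT ⊕ Fin k0 =>
        (if Sum.inr a = j then (1:ZMod 2) else 0) = 1)) = {Sum.inr a} := by
      ext j
      by_cases h1 : Sum.inr a = j
      · subst h1; simp
      · simp [h1, Ne.symm h1]
    have hid' : (univ.filter (fun j : Fin k0 =>
        (if (Sum.inr a : Fin kT ⊕ Fin k0) = Sum.inr j then (1:ZMod 2) else 0) = 1)) = {a} := by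
      ext j
      by_cases h1 : a = j
      · subst h1; simp
      · simp [h1, Ne.symm h1, Sum.inr.injEq]
    rw [hid, Finset.card_singleton] at h
    erw [hid', Finset.card_singleton]
    exact h
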